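/- Let G be a graph, S a 2-club in G (i.e., the induced subgraph G[S] has diameter at most 2), and let u, v be twins in G (i.e., N(u)\{v} = N(v)\{u}). If u ∈ S and |S| > 1, then S ∪ {v} is also a 2-club in G. -/

import Mathlib

def IsSClub {V : Type*} (G : SimpleGraph V) (s : ℕ) (S : Set V) : Prop :=
  ∀ u v : S, ∃ p : (G.induce S).Walk u v, p.length ≤ s

lemma walk_le_two_cases {W : Type*} {H : SimpleGraph W} {a b : W}
    (p : H.Walk a b) (hp : p.length ≤ 2) :
    a = b ∨ H.Adj a b ∨ ∃ z, H.Adj a z ∧ H.Adj z b := by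
  match p with
  | .nil => exact Or.inl rfl
  | .cons h .nil => exact Or.inr (Or.inl h)
  | .cons (v := z) h (.cons (v := w) h' q) =>
    have hq : q.length = 0 := by
      simp only [SimpleGraph.Walk.length_cons] at hp; omega
    have := q.eq_of_length_eq_zero hq
    subst this
    exact Or.inr (Or.inr ⟨z, h, h'⟩)

lemma exists_walk_le_two {W : Type*} {H : SimpleGraph W} {a b : W}
    (h : a = b ∨ H.Adj a b ∨ ∃ z, H.Adj a z ∧ H.Adj z b) :
    ∃ p : H.Walk a b, p.length ≤ 2 := by
  rcases h with rfl | h | ⟨z, h1, h2⟩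
  · exact ⟨.nil, by simp⟩
  · exact ⟨.cons h .nil, by simp⟩
  · exact ⟨.cons h1 (.cons h2 .nil), by simp⟩

theorem stmt_0 {V : Type*} [Fintype V] [DecidableEq V] (G : SimpleGraph V)
    (S : Set V) (u v : V)
    (hS : IsSClub G 2 S)
    (htwin : G.neighborSet u \ {v} = G.neighborSet v \ {u})
    (hu : u ∈ S) (hcard : 1 < S.ncard) :
    IsSClub G 2 (S ∪ {v}) := by
  classical
  by_cases hv : v ∈ S
  · have hEq : S ∪ {v} = S := by
      rw [Set.union_eq_self_of_subset_right (Set.singleton_subset_iff.mpr hv)]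
    rw [hEq]; exact hS
  -- v ∉ S
  have twin : ∀ z : V, G.Adj u z → z ≠ v → G.Adj v z := by
    intro z hz hzv
    have : z ∈ G.neighborSet u \ {v} := ⟨hz, by simpa using hzv⟩
    rw [htwin] at this
    exact this.1
  -- S-level fact
  have hSfact : ∀ a b : V, a ∈ S → b ∈ S →
      a = b ∨ G.Adj a b ∨ ∃ z ∈ S, G.Adj a z ∧ G.Adj z b := by
    intro a b ha hb
    obtain ⟨p, hp⟩ := hS ⟨a, ha⟩ ⟨b, hb⟩
    rcases walk_le_two_cases p hp with h | h | ⟨z, h1, h2⟩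
    · exact Or.inl (congrArg Subtype.val h)
    · exact Or.inr (Or.inl h)
    · exact Or.inr (Or.inr ⟨z, z.2, h1, h2⟩)
  -- P x v for x ∈ S
  have hPv : ∀ x : V, x ∈ S →
      G.Adj x v ∨ ∃ z ∈ S, G.Adj x z ∧ G.Adj z v := by
    intro x hx
    by_cases hxu : x = u
    · subst hxu
      -- find some w ∈ S, w ≠ x
      obtain ⟨w, hw, hwx⟩ : ∃ w ∈ S, w ≠ x := by
        by_contra h
        push_neg at h
        have : S ⊆ {x} := fun y hy => h y hy
        have := Set.ncard_le_ncard this (Set.finite_singleton x)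
        rw [Set.ncard_singleton] at this
        omega
      rcases hSfact x w hx hw with h | h | ⟨z, hz, h1, h2⟩
      · exact absurd h.symm hwx
      · have hzv : w ≠ v := fun e => hv (e ▸ hw)
        exact Or.inr ⟨w, hw, h, (twin w h hzv).symm⟩
      · have hzv : z ≠ v := fun e => hv (e ▸ hz)
        exact Or.inr ⟨z, hz, h1, (twin z h1 hzv).symm⟩
    · rcases hSfact x u hx hu with h | h | ⟨z, hz, h1, h2⟩
      · exact absurd h hxu
      · have hxv : x ≠ v := fun e => hv (e ▸ hx)
        exact Or.inl (twin x h.symm hxv).symm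
      · have hzv : z ≠ v := fun e => hv (e ▸ hz)
        exact Or.inr ⟨z, hz, h1, (twin z h2.symm hzv).symm⟩
  -- main
  intro x y
  apply exists_walk_le_two
  have hx := x.2
  have hy := y.2
  rcases hx with hxS | hxv
  · rcases hy with hyS | hyv
    · rcases hSfact x y hxS hyS with h | h | ⟨z, hz, h1, h2⟩
      · exact Or.inl (Subtype.ext h)
      · exact Or.inr (Or.inl h)
      · exact Or.inr (Or.inr ⟨⟨z, Or.inl hz⟩, h1, h2⟩)
    · have hyv : y = ⟨v, Or.inr rfl⟩ := Subtype.ext hyv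
      subst hyv
      rcases hPv x hxS with h | ⟨z, hz, h1, h2⟩
      · exact Or.inr (Or.inl h)
      · exact Or.inr (Or.inr ⟨⟨z, Or.inl hz⟩, h1, h2⟩)
  · have hxv : x = ⟨v, Or.inr rfl⟩ := Subtype.ext hxv
    subst hxv
    rcases hy with hyS | hyv
    · rcases hPv y hyS with h | ⟨z, hz, h1, h2⟩
      · exact Or.inr (Or.inl h.symm)
      · exact Or.inr (Or.inr ⟨⟨z, Or.inl hz⟩, h2.symm, h1.symm⟩)
    · exact Or.inl (Subtype.ext hyv.symm)
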